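/- Two-step reverse Hölder bound: for finite random variables X, Y with joint pmf p_{XY} and marginals p_X, p_Y, any function f : X × Y → ℝ with f > 0, and exponents α < 1, α' < 1 (α, α' ≠ 0) with conjugates 1/α + 1/β = 1 and 1/α' + 1/β' = 1: E_{p_{XY}}[f] ≥ (E_{p_Y}[ (E_{p_X}[f^β])^{β'/β} ])^{1/β'} · (E_{p_Y}[ (E_{p_X}[(p_{XY}/(p_X p_Y))^α])^{α'/α} ])^{1/α'}. -/

import Mathlib

open Real Finset

/-- Core reverse Hölder: `0 < α < 1`, conjugate `β < 0`. -/
lemma rev_holder_core {ι : Type*} (s : Finset ι) (w a b : ι → ℝ)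
    (hw : ∀ i ∈ s, 0 < w i) (ha : ∀ i ∈ s, 0 < a i) (hb : ∀ i ∈ s, 0 < b i)
    (hs : s.Nonempty) {α β : ℝ} (hα : 0 < α) (hα1 : α < 1) (hαβ : 1 / α + 1 / β = 1) :
    (∑ i ∈ s, w i * a i ^ α) ^ (1 / α) * (∑ i ∈ s, w i * b i ^ β) ^ (1 / β)
      ≤ ∑ i ∈ s, w i * a i * b i := by
  have hαne : α ≠ 0 := hα.ne'
  have h1α : 1 < 1 / α := one_lt_one_div hα hα1
  have hβinv : 1 / β = 1 - 1 / α := by linarith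
  have hβneg : β < 0 := by
    have : 1 / β < 0 := by linarith
    exact one_div_neg.mp this
  have hβne : β ≠ 0 := hβneg.ne
  have hβval : β = -α / (1 - α) := by
    have h1 : (1 : ℝ) / β = (α - 1) / α := by
      rw [hβinv]; field_simp
    have h2 : β * ((α - 1) / α) = 1 := by
      rw [← h1]; field_simp
    have hα1' : α - 1 ≠ 0 := sub_ne_zero.mpr hα1.ne
    field_simp at h2
    have h1α' : (1 : ℝ) - α ≠ 0 := by
      intro h; apply hα1'; linarith
    field_simp
    linear_combination -h2
  -- positivity of the sums
  have hS : 0 < ∑ i ∈ s, w i * a i * b i :=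
    Finset.sum_pos (fun i hi => by have := hw i hi; have := ha i hi; have := hb i hi; positivity) hs
  have hT : 0 < ∑ i ∈ s, w i * b i ^ β :=
    Finset.sum_pos (fun i hi => by have := hw i hi; have := hb i hi; positivity) hs
  have hU : 0 < ∑ i ∈ s, w i * a i ^ α :=
    Finset.sum_pos (fun i hi => by have := hw i hi; have := ha i hi; positivity) hs
  -- forward Hölder with exponents 1/α and 1/(1-α)
  have hPQ : (1 / α).HolderConjugate (1 / (1 - α)) := by
    refine Real.holderConjugate_iff.mpr ⟨?_, ?_⟩
    · exact h1α
    · simp only [one_div, inv_inv]; ring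
  have hHolder := Real.inner_le_Lp_mul_Lq_of_nonneg (s := s)
      (f := fun i => (w i * a i * b i) ^ α)
      (g := fun i => w i ^ (1 - α) * b i ^ (-α)) hPQ
      (fun i hi => by have := hw i hi; have := ha i hi; have := hb i hi; positivity)
      (fun i hi => by have := hw i hi; have := hb i hi; positivity)
  have e1 : ∑ i ∈ s, (w i * a i * b i) ^ α * (w i ^ (1 - α) * b i ^ (-α))
      = ∑ i ∈ s, w i * a i ^ α := by
    refine Finset.sum_congr rfl fun i hi => ?_
    have hwi := hw i hi; have hai := ha i hi; have hbi := hb i hi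
    rw [Real.mul_rpow (by positivity) hbi.le, Real.mul_rpow hwi.le hai.le]
    have h1 : w i ^ α * w i ^ (1 - α) = w i := by
      rw [← Real.rpow_add hwi]; simp
    have h2 : b i ^ α * b i ^ (-α) = 1 := by
      rw [← Real.rpow_add hbi]; simp
    calc w i ^ α * a i ^ α * b i ^ α * (w i ^ (1 - α) * b i ^ (-α))
        = (w i ^ α * w i ^ (1 - α)) * (b i ^ α * b i ^ (-α)) * a i ^ α := by ring
      _ = w i * a i ^ α := by rw [h1, h2]; ring
  have e2 : ∑ i ∈ s, ((w i * a i * b i) ^ α) ^ (1 / α) = ∑ i ∈ s, w i * a i * b i := by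
    refine Finset.sum_congr rfl fun i hi => ?_
    have hwi := hw i hi; have hai := ha i hi; have hbi := hb i hi
    rw [← Real.rpow_mul (by positivity), mul_one_div_cancel hαne, Real.rpow_one]
  have e3 : ∑ i ∈ s, (w i ^ (1 - α) * b i ^ (-α)) ^ (1 / (1 - α))
      = ∑ i ∈ s, w i * b i ^ β := by
    refine Finset.sum_congr rfl fun i hi => ?_
    have hwi := hw i hi; have hbi := hb i hi
    have h1α' : (1 : ℝ) - α ≠ 0 := by linarith
    rw [Real.mul_rpow (by positivity) (by positivity),
      ← Real.rpow_mul hwi.le, ← Real.rpow_mul hbi.le,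
      mul_one_div_cancel h1α', Real.rpow_one]
    congr 1
    rw [hβval]; field_simp
  rw [e1] at hHolder
  have e2' : (∑ i ∈ s, ((w i * a i * b i) ^ α) ^ (1/α)) ^ (1 / (1/α))
      = (∑ i ∈ s, w i * a i * b i) ^ α := by
    rw [e2, one_div_one_div]
  have e3' : (∑ i ∈ s, (w i ^ (1 - α) * b i ^ (-α)) ^ (1/(1-α))) ^ (1 / (1/(1-α)))
      = (∑ i ∈ s, w i * b i ^ β) ^ (1 - α) := by
    rw [e3, one_div_one_div]
  rw [e2', e3'] at hHolder
  -- now hHolder : U ≤ S^α * T^(1-α)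
  set S := ∑ i ∈ s, w i * a i * b i
  set T := ∑ i ∈ s, w i * b i ^ β
  set U := ∑ i ∈ s, w i * a i ^ α
  have h4 : U ^ (1 / α) ≤ S * T ^ ((1 - α) / α) := by
    have := Real.rpow_le_rpow hU.le hHolder (by positivity : (0:ℝ) ≤ 1/α)
    rwa [Real.mul_rpow (by positivity) (by positivity),
      ← Real.rpow_mul hS.le, ← Real.rpow_mul hT.le,
      mul_one_div_cancel hαne, Real.rpow_one, mul_one_div] at this
  calc U ^ (1 / α) * T ^ (1 / β)
      ≤ (S * T ^ ((1 - α) / α)) * T ^ (1 / β) := by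
        apply mul_le_mul_of_nonneg_right h4 (by positivity)
    _ = S * T ^ ((1 - α) / α + 1 / β) := by
        rw [mul_assoc, ← Real.rpow_add hT]
    _ = S := by
        have : (1 - α) / α + 1 / β = 0 := by
          rw [hβinv]; field_simp; ring
        rw [this, Real.rpow_zero, mul_one]

/-- Weighted reverse Hölder inequality for finite sums. -/
lemma rev_holder {ι : Type*} (s : Finset ι) (w a b : ι → ℝ)
    (hw : ∀ i ∈ s, 0 < w i) (ha : ∀ i ∈ s, 0 < a i) (hb : ∀ i ∈ s, 0 < b i)
    (hs : s.Nonempty) {α β : ℝ} (hα1 : α < 1) (hα0 : α ≠ 0) (hαβ : 1 / α + 1 / β = 1) :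
    (∑ i ∈ s, w i * a i ^ α) ^ (1 / α) * (∑ i ∈ s, w i * b i ^ β) ^ (1 / β)
      ≤ ∑ i ∈ s, w i * a i * b i := by
  rcases lt_or_gt_of_ne hα0 with hneg | hpos
  · -- α < 0, so 0 < β < 1; apply core with roles swapped
    have h1β : 1 < 1 / β := by
      have : 1 / α < 0 := one_div_neg.mpr hneg
      linarith
    have hβpos : 0 < β := by
      by_contra h
      push_neg at h
      rcases h.lt_or_eq with h | h
      · have : 1 / β < 0 := one_div_neg.mpr h
        linarith
      · rw [h] at h1β; norm_num at h1β
    have hβ1 : β < 1 := by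
      have h := mul_lt_mul_of_pos_left h1β hβpos
      rw [mul_one, mul_one_div_cancel hβpos.ne'] at h
      exact h
    have := rev_holder_core (β := α) s w b a hw hb ha hs hβpos hβ1 (by linarith)
    calc (∑ i ∈ s, w i * a i ^ α) ^ (1 / α) * (∑ i ∈ s, w i * b i ^ β) ^ (1 / β)
        = (∑ i ∈ s, w i * b i ^ β) ^ (1 / β) * (∑ i ∈ s, w i * a i ^ α) ^ (1 / α) := by ring
      _ ≤ ∑ i ∈ s, w i * b i * a i := this
      _ = ∑ i ∈ s, w i * a i * b i := by
          refine Finset.sum_congr rfl fun i _ => by ring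
  · exact rev_holder_core s w a b hw ha hb hs hpos hα1 hαβ

/-- Two-step reverse Hölder bound. -/
theorem two_step_reverse_holder
    {X Y : Type*} [Fintype X] [Fintype Y]
    (p : X × Y → ℝ) (hp : ∀ z, 0 < p z) (hp1 : ∑ z, p z = 1)
    (pX : X → ℝ) (hpX : ∀ x, pX x = ∑ y, p (x, y))
    (pY : Y → ℝ) (hpY : ∀ y, pY y = ∑ x, p (x, y))
    (f : X × Y → ℝ) (hf : ∀ z, 0 < f z)
    (α β α' β' : ℝ)
    (hα : α < 1) (hα0 : α ≠ 0) (hα' : α' < 1) (hα'0 : α' ≠ 0)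
    (hβ : 1 / α + 1 / β = 1) (hβ' : 1 / α' + 1 / β' = 1) :
    (∑ z, p z * f z)
      ≥ (∑ y, pY y * (∑ x, pX x * f (x, y) ^ β) ^ (β' / β)) ^ (1 / β')
        * (∑ y, pY y *
            (∑ x, pX x * (p (x, y) / (pX x * pY y)) ^ α) ^ (α' / α)) ^ (1 / α') := by
  -- nonemptiness
  have hne : Nonempty (X × Y) := by
    rcases isEmpty_or_nonempty (X × Y) with h | h
    · simp [Finset.sum_empty] at hp1
    · exact h
  have hneX : Nonempty X := ⟨hne.some.1⟩
  have hneY : Nonempty Y := ⟨hne.some.2⟩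
  have huX : (Finset.univ : Finset X).Nonempty := Finset.univ_nonempty
  have huY : (Finset.univ : Finset Y).Nonempty := Finset.univ_nonempty
  have hpX0 : ∀ x, 0 < pX x := fun x => by
    rw [hpX]; exact Finset.sum_pos (fun y _ => hp _) huY
  have hpY0 : ∀ y, 0 < pY y := fun y => by
    rw [hpY]; exact Finset.sum_pos (fun x _ => hp _) huX
  set r : X × Y → ℝ := fun z => p z / (pX z.1 * pY z.2) with hr
  have hr0 : ∀ z, 0 < r z := fun z => by
    have := hp z; have := hpX0 z.1; have := hpY0 z.2; positivity
  -- rewrite LHS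
  have key : (∑ z, p z * f z)
      = ∑ y, pY y * ∑ x, pX x * (r (x, y) * f (x, y)) := by
    rw [Fintype.sum_prod_type]
    rw [Finset.sum_comm]
    refine Finset.sum_congr rfl fun y _ => ?_
    rw [Finset.mul_sum]
    refine Finset.sum_congr rfl fun x _ => ?_
    have h1 := (hpX0 x).ne'
    have h2 := (hpY0 y).ne'
    simp only [hr]
    field_simp
  -- step 1: inner reverse Hölder for each y
  set A : Y → ℝ := fun y => (∑ x, pX x * r (x, y) ^ α) ^ (1 / α) with hA
  set B : Y → ℝ := fun y => (∑ x, pX x * f (x, y) ^ β) ^ (1 / β) with hB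
  have hA0 : ∀ y, 0 < A y := fun y => by
    have : 0 < ∑ x, pX x * r (x, y) ^ α :=
      Finset.sum_pos (fun x _ => by have := hpX0 x; have := hr0 (x, y); positivity) huX
    positivity
  have hB0 : ∀ y, 0 < B y := fun y => by
    have : 0 < ∑ x, pX x * f (x, y) ^ β :=
      Finset.sum_pos (fun x _ => by have := hpX0 x; have := hf (x, y); positivity) huX
    positivity
  have step1 : ∀ y, A y * B y ≤ ∑ x, pX x * (r (x, y) * f (x, y)) := by
    intro y
    have := rev_holder Finset.univ pX (fun x => r (x, y)) (fun x => f (x, y))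
      (fun x _ => hpX0 x) (fun x _ => hr0 (x, y)) (fun x _ => hf (x, y)) huX hα hα0 hβ
    calc A y * B y ≤ ∑ x, pX x * r (x, y) * f (x, y) := this
      _ = ∑ x, pX x * (r (x, y) * f (x, y)) :=
        Finset.sum_congr rfl fun x _ => by ring
  -- step 2: outer reverse Hölder
  have step2 : (∑ y, pY y * A y ^ α') ^ (1 / α') * (∑ y, pY y * B y ^ β') ^ (1 / β')
      ≤ ∑ y, pY y * A y * B y :=
    rev_holder Finset.univ pY A B (fun y _ => hpY0 y) (fun y _ => hA0 y)
      (fun y _ => hB0 y) huY hα' hα'0 hβ'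
  -- identify the powers
  have eA : ∀ y, A y ^ α' = (∑ x, pX x * r (x, y) ^ α) ^ (α' / α) := by
    intro y
    have hs : 0 ≤ ∑ x, pX x * r (x, y) ^ α :=
      Finset.sum_nonneg fun x _ => by have := hpX0 x; have := hr0 (x, y); positivity
    rw [hA, ← Real.rpow_mul hs, one_div, inv_mul_eq_div]
  have eB : ∀ y, B y ^ β' = (∑ x, pX x * f (x, y) ^ β) ^ (β' / β) := by
    intro y
    have hs : 0 ≤ ∑ x, pX x * f (x, y) ^ β :=
      Finset.sum_nonneg fun x _ => by have := hpX0 x; have := hf (x, y); positivity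
    rw [hB, ← Real.rpow_mul hs, one_div, inv_mul_eq_div]
  rw [ge_iff_le, key]
  calc (∑ y, pY y * (∑ x, pX x * f (x, y) ^ β) ^ (β' / β)) ^ (1 / β')
        * (∑ y, pY y * (∑ x, pX x * r (x, y) ^ α) ^ (α' / α)) ^ (1 / α')
      = (∑ y, pY y * A y ^ α') ^ (1 / α') * (∑ y, pY y * B y ^ β') ^ (1 / β') := by
        rw [mul_comm]
        congr 1
        · congr 1; exact Finset.sum_congr rfl fun y _ => by rw [eA]
        · congr 1; exact Finset.sum_congr rfl fun y _ => by rw [eB]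
    _ ≤ ∑ y, pY y * A y * B y := step2
    _ ≤ ∑ y, pY y * ∑ x, pX x * (r (x, y) * f (x, y)) := by
        refine Finset.sum_le_sum fun y _ => ?_
        rw [mul_assoc]
        exact mul_le_mul_of_nonneg_left (step1 y) (hpY0 y).le
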